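/- Let λ¹ < λ² < … < λ^s be the elements of the set 𝓔 = {λ(e,f) : (e,f) ∈ 𝓟} of intersection values, and set λ⁰ = 0. Then for every k ∈ {1,…,s}, the ordering S^↑_{λ^{k−1}} equals the ordering S^↓_{λ^k}; equivalently, for all elements e, f ∈ E, e precedes f in S^↑_{λ^{k−1}} if and only if e precedes f in S^↓_{λ^k}. -/
import Mathlib


open Set

noncomputable section

/-- The weighted cost `c_λ(e) = λ·c₁(e) + (1−λ)·c₂(e)`. -/
def clam {α : Type*} (c₁ c₂ : α → ℝ) (lam : ℝ) (e : α) : ℝ :=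
  lam * c₁ e + (1 - lam) * c₂ e

/-- The set `𝓟` of pairs `(e,f)` with `c₁(e) > c₁(f)` and `c₂(e) < c₂(f)`. -/
def Pset {α : Type*} (c₁ c₂ : α → ℝ) : Set (α × α) :=
  {p | c₁ p.2 < c₁ p.1 ∧ c₂ p.1 < c₂ p.2}

/-- The set `𝓔 = {λ(e,f) : (e,f) ∈ 𝓟}` of intersection values: for `(e,f) ∈ 𝓟`, `λ(e,f)` is
the unique `t ∈ (0,1)` with `c_t(e) = c_t(f)`. -/
def crossSet {α : Type*} (c₁ c₂ : α → ℝ) : Set ℝ :=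
  {t | t ∈ Set.Ioo (0 : ℝ) 1 ∧
    ∃ p ∈ Pset c₁ c₂, clam c₁ c₂ t p.1 = clam c₁ c₂ t p.2}

/-- `e` strictly precedes `f` in the ordering `S^↑_λ`, i.e. in the non-descending
lexicographic order by the key `(c_λ(e), c₁(e))` with remaining ties broken by the fixed
linear order on the ground set. -/
def precUp {α : Type*} [LinearOrder α] (c₁ c₂ : α → ℝ) (lam : ℝ) (e f : α) : Prop :=
  clam c₁ c₂ lam e < clam c₁ c₂ lam f ∨
    (clam c₁ c₂ lam e = clam c₁ c₂ lam f ∧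
      (c₁ e < c₁ f ∨ (c₁ e = c₁ f ∧ e < f)))

/-- `e` strictly precedes `f` in the ordering `S^↓_λ`, i.e. in the non-descending
lexicographic order by the key `(c_λ(e), −c₁(e))` with remaining ties broken by the fixed
linear order on the ground set. -/
def precDown {α : Type*} [LinearOrder α] (c₁ c₂ : α → ℝ) (lam : ℝ) (e f : α) : Prop :=
  clam c₁ c₂ lam e < clam c₁ c₂ lam f ∨
    (clam c₁ c₂ lam e = clam c₁ c₂ lam f ∧
      (c₁ f < c₁ e ∨ (c₁ e = c₁ f ∧ e < f)))

/-- If one element is strictly cheaper at `a` and strictly more expensive at `b`, the two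
weighted costs cross at some `t ∈ (a, b)`, which is an intersection value. -/
lemma cross_mem {α : Type*} (c₁ c₂ : α → ℝ) {e f : α} {a b : ℝ}
    (ha : 0 ≤ a) (hb : b < 1) (hab : a < b)
    (h1 : clam c₁ c₂ a e < clam c₁ c₂ a f) (h2 : clam c₁ c₂ b f < clam c₁ c₂ b e) :
    ∃ t ∈ crossSet c₁ c₂, a < t ∧ t < b := by
  have hcont : Continuous (fun t => clam c₁ c₂ t e - clam c₁ c₂ t f) := by
    simp only [clam]; continuity
  have hmem : (0:ℝ) ∈ Ioo (clam c₁ c₂ a e - clam c₁ c₂ a f)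
      (clam c₁ c₂ b e - clam c₁ c₂ b f) := ⟨by linarith, by linarith⟩
  obtain ⟨t, ht, hgt⟩ := intermediate_value_Ioo hab.le hcont.continuousOn hmem
  have ht0 : 0 < t := lt_of_le_of_lt ha ht.1
  have ht1 : t < 1 := lt_trans ht.2 hb
  have hgt' : clam c₁ c₂ t e = clam c₁ c₂ t f := by
    have := hgt; simp only at this; linarith [sub_eq_zero.mp this]
  simp only [clam] at h1 h2 hgt'
  have hu : c₁ f < c₁ e := by nlinarith [ht.1, ht.2]
  have hv : c₂ e < c₂ f := by nlinarith [ht.1, ht.2]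
  exact ⟨t, ⟨⟨ht0, ht1⟩, ⟨(e, f), ⟨hu, hv⟩, by simpa [clam] using hgt'⟩⟩, ht.1, ht.2⟩

/-- Let `μ ∈ 𝓔 ∪ {0}` and `ν ∈ 𝓔` be consecutive intersection values
(`μ < ν` with no element of `𝓔` strictly in between).  Then the ordering `S^↑_μ` equals the
ordering `S^↓_ν`: for all `e, f`, `e` precedes `f` in `S^↑_μ` iff `e` precedes `f` in
`S^↓_ν`. -/
theorem up_ordering_eq_next_down_ordering
    {α : Type*} [Fintype α] [LinearOrder α] (c₁ c₂ : α → ℝ)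
    (μ ν : ℝ) (hμ : μ ∈ insert (0 : ℝ) (crossSet c₁ c₂)) (hν : ν ∈ crossSet c₁ c₂)
    (hlt : μ < ν) (hconsec : ∀ t ∈ crossSet c₁ c₂, ¬(μ < t ∧ t < ν)) :
    ∀ e f : α, precUp c₁ c₂ μ e f ↔ precDown c₁ c₂ ν e f := by
  have hν0 : 0 < ν := hν.1.1
  have hν1 : ν < 1 := hν.1.2
  have hμ0 : 0 ≤ μ := by
    rcases Set.mem_insert_iff.mp hμ with h | h
    · exact le_of_eq h.symm
    · exact h.1.1.le
  have hμ1 : μ < 1 := lt_trans hlt hν1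
  intro e f
  simp only [precUp, precDown]
  constructor
  · rintro (h | ⟨heq, hd | ⟨hd, hef⟩⟩)
    · rcases lt_trichotomy (clam c₁ c₂ ν e) (clam c₁ c₂ ν f) with h' | h' | h'
      · exact Or.inl h'
      · refine Or.inr ⟨h', Or.inl ?_⟩
        simp only [clam] at h h'
        nlinarith [h, h', hμ0, hν1, hlt]
      · exfalso
        obtain ⟨t, ht, h1, h2⟩ := cross_mem c₁ c₂ hμ0 hν1 hlt h h'
        exact hconsec t ht ⟨h1, h2⟩
    · left
      simp only [clam] at heq ⊢
      nlinarith [mul_pos (sub_pos.2 hlt) (sub_pos.2 hd), heq, hμ0, hν1]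
    · have hv : c₂ e = c₂ f := by
        have key : (1 - μ) * (c₂ e - c₂ f) = 0 := by
          simp only [clam] at heq
          linear_combination heq - μ * hd
        have h1μ : (1 : ℝ) - μ ≠ 0 := by linarith
        have := (mul_eq_zero.mp key).resolve_left h1μ
        linarith
      exact Or.inr ⟨by simp only [clam]; rw [hd, hv], Or.inr ⟨hd, hef⟩⟩
  · rintro (h | ⟨heq, hd | ⟨hd, hef⟩⟩)
    · rcases lt_trichotomy (clam c₁ c₂ μ e) (clam c₁ c₂ μ f) with h' | h' | h'
      · exact Or.inl h'
      · refine Or.inr ⟨h', Or.inl ?_⟩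
        simp only [clam] at h h'
        nlinarith [h, h', hμ0, hν1, hlt]
      · exfalso
        obtain ⟨t, ht, h1, h2⟩ := cross_mem c₁ c₂ hμ0 hν1 hlt h' h
        exact hconsec t ht ⟨h1, h2⟩
    · left
      simp only [clam] at heq ⊢
      nlinarith [mul_pos (sub_pos.2 hlt) (sub_pos.2 hd), heq, hμ0, hν1]
    · have hv : c₂ e = c₂ f := by
        have key : (1 - ν) * (c₂ e - c₂ f) = 0 := by
          simp only [clam] at heq
          linear_combination heq - ν * hd
        have h1ν : (1 : ℝ) - ν ≠ 0 := by linarith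
        have := (mul_eq_zero.mp key).resolve_left h1ν
        linarith
      exact Or.inr ⟨by simp only [clam]; rw [hd, hv], Or.inr ⟨hd, hef⟩⟩
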